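/- Suppose that ‖Z_t‖ ≤ 2√‖X‖, ‖Δ_t‖ ≤ ‖X‖/100, ‖Z_tQ_{t,⊥}‖ ≤ √‖X‖/100, ‖L_{X,⊥}ᵀP_{Z_tQ_t}‖ ≤ 1/100, and μ ≤ 1/(100‖X‖). Then ‖Z_{t+1}‖ ≤ 2√‖X‖. -/

import Mathlib

open Matrix MeasureTheory ProbabilityTheory

noncomputable section

namespace AsymMatrixSensing

/-- Euclidean norm of a real vector. -/
def euclNorm {ι : Type*} [Fintype ι] (v : ι → ℝ) : ℝ :=
  Real.sqrt (∑ i, v i ^ 2)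

/-- Spectral norm of a real matrix. -/
def specNorm {ι₁ ι₂ : Type*} [Fintype ι₁] [Fintype ι₂] (M : Matrix ι₁ ι₂ ℝ) : ℝ :=
  sSup {c : ℝ | ∃ x : ι₂ → ℝ, euclNorm x ≤ 1 ∧ c = euclNorm (M.mulVec x)}

/-- Frobenius norm of a real matrix. -/
def frobNorm {ι₁ ι₂ : Type*} [Fintype ι₁] [Fintype ι₂] (M : Matrix ι₁ ι₂ ℝ) : ℝ :=
  Real.sqrt (∑ i, ∑ j, M i j ^ 2)

/-- Nuclear norm of a real matrix (characterized by duality with the spectral norm). -/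
def nucNorm {ι₁ ι₂ : Type*} [Fintype ι₁] [Fintype ι₂] (M : Matrix ι₁ ι₂ ℝ) : ℝ :=
  sSup {c : ℝ | ∃ B : Matrix ι₁ ι₂ ℝ, specNorm B ≤ 1 ∧ c = ∑ i, ∑ j, M i j * B i j}

/-- Smallest singular value `σ_{min(a,b)}(M)` of a matrix. -/
def sigmaMin {ι₁ ι₂ : Type*} [Fintype ι₁] [Fintype ι₂] (M : Matrix ι₁ ι₂ ℝ) : ℝ :=
  max (sInf {c : ℝ | ∃ x : ι₂ → ℝ, euclNorm x = 1 ∧ c = euclNorm (M.mulVec x)})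
      (sInf {c : ℝ | ∃ y : ι₁ → ℝ, euclNorm y = 1 ∧ c = euclNorm (Mᵀ.mulVec y)})

/-- Smallest nonzero singular value `σ_rank(M)`: the minimum of `‖Mx‖` over unit
vectors `x` orthogonal to the kernel of `M`. -/
def sigmaPos {ι₁ ι₂ : Type*} [Fintype ι₁] [Fintype ι₂] (M : Matrix ι₁ ι₂ ℝ) : ℝ :=
  sInf {c : ℝ | ∃ x : ι₂ → ℝ, euclNorm x = 1 ∧
    (∀ y : ι₂ → ℝ, M.mulVec y = 0 → x ⬝ᵥ y = 0) ∧ c = euclNorm (M.mulVec x)}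

/-- Condition number `κ = ‖M‖ / σ_min(M)`. -/
def condNum {ι₁ ι₂ : Type*} [Fintype ι₁] [Fintype ι₂] (M : Matrix ι₁ ι₂ ℝ) : ℝ :=
  specNorm M / sigmaPos M

/-- Trace inner product `⟨M, N⟩ = trace(Mᵀ N)`. -/
def minner {ι₁ ι₂ : Type*} [Fintype ι₁] [Fintype ι₂] (M N : Matrix ι₁ ι₂ ℝ) : ℝ :=
  ∑ i, ∑ j, M i j * N i j

/-- `P` is a matrix with orthonormal columns spanning the column space of `M`. -/
def IsOrthCol {ι κ₁ κ₂ : Type*} [Fintype ι] [Fintype κ₁] [Fintype κ₂] [DecidableEq κ₂]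
    (P : Matrix ι κ₂ ℝ) (M : Matrix ι κ₁ ℝ) : Prop :=
  Pᵀ * P = 1 ∧ (∃ C : Matrix κ₁ κ₂ ℝ, P = M * C) ∧ P * Pᵀ * M = M

/-- `L` has orthonormal columns spanning the subspace spanned by eigenvectors of the
symmetric matrix `F` corresponding to its `r` largest eigenvalues. -/
def IsTopEigenspace {ι : Type*} [Fintype ι] [DecidableEq ι] {r : ℕ} (F : Matrix ι ι ℝ)
    (L : Matrix ι (Fin r) ℝ) : Prop :=
  Lᵀ * L = 1 ∧ ∃ d : Fin r → ℝ, F * L = L * Matrix.diagonal d ∧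
    ∀ (v : ι → ℝ) (lam : ℝ), v ≠ 0 → F.mulVec v = lam • v →
      Lᵀ.mulVec v = 0 → ∀ i, lam ≤ d i

variable {n₁ n₂ m k r : ℕ}

/-- The measurement operator `𝒜`, given by `[𝒜(Z)]ᵢ = ⟨Aᵢ, Z⟩`. -/
def calA (A : Fin m → Matrix (Fin n₁) (Fin n₂) ℝ) (Z : Matrix (Fin n₁) (Fin n₂) ℝ) :
    Fin m → ℝ := fun i => minner (A i) Z

/-- The restricted isometry property of order `s` with constant `δ`. -/
def HasRIP (A : Fin m → Matrix (Fin n₁) (Fin n₂) ℝ) (s : ℕ) (δ : ℝ) : Prop :=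
  ∀ M : Matrix (Fin n₁) (Fin n₂) ℝ, M.rank ≤ s →
    (1 - δ) * frobNorm M ^ 2 ≤ ∑ i, calA A M i ^ 2 ∧
      ∑ i, calA A M i ^ 2 ≤ (1 + δ) * frobNorm M ^ 2

/-- `𝒜*𝒜`. -/
def AstarA (A : Fin m → Matrix (Fin n₁) (Fin n₂) ℝ) (Z : Matrix (Fin n₁) (Fin n₂) ℝ) :
    Matrix (Fin n₁) (Fin n₂) ℝ := ∑ i, minner (A i) Z • A i

/-- The symmetrization `sym(X) = [[0, X], [Xᵀ, 0]]`. -/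
def symMat (X : Matrix (Fin n₁) (Fin n₂) ℝ) :
    Matrix (Fin n₁ ⊕ Fin n₂) (Fin n₁ ⊕ Fin n₂) ℝ := Matrix.fromBlocks 0 X Xᵀ 0

/-- The symmetrized measurement matrices `Bᵢ = (1/√2)[[0, Aᵢ], [Aᵢᵀ, 0]]`. -/
def Bmat (A : Fin m → Matrix (Fin n₁) (Fin n₂) ℝ) (i : Fin m) :
    Matrix (Fin n₁ ⊕ Fin n₂) (Fin n₁ ⊕ Fin n₂) ℝ :=
  (Real.sqrt 2)⁻¹ • Matrix.fromBlocks 0 (A i) (A i)ᵀ 0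

/-- `ℬ*ℬ`. -/
def BstarB (A : Fin m → Matrix (Fin n₁) (Fin n₂) ℝ)
    (S : Matrix (Fin n₁ ⊕ Fin n₂) (Fin n₁ ⊕ Fin n₂) ℝ) :
    Matrix (Fin n₁ ⊕ Fin n₂) (Fin n₁ ⊕ Fin n₂) ℝ :=
  ∑ i, minner (Bmat A i) S • Bmat A i

/-- The factorized gradient descent iterates `(V_t, W_t)`. -/
def iter (A : Fin m → Matrix (Fin n₁) (Fin n₂) ℝ) (X : Matrix (Fin n₁) (Fin n₂) ℝ)
    (μ : ℝ) (V₀ : Matrix (Fin n₁) (Fin k) ℝ) (W₀ : Matrix (Fin n₂) (Fin k) ℝ) :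
    ℕ → Matrix (Fin n₁) (Fin k) ℝ × Matrix (Fin n₂) (Fin k) ℝ
  | 0 => (V₀, W₀)
  | t + 1 =>
    let p := iter A X μ V₀ W₀ t
    let G := AstarA A (p.1 * p.2ᵀ - X)
    (p.1 - μ • (G * p.2), p.2 - μ • (Gᵀ * p.1))

/-- The vertical stacking `(1/√2)[V; W]`. -/
def Zstack {κ : ℕ} (V : Matrix (Fin n₁) (Fin κ) ℝ) (W : Matrix (Fin n₂) (Fin κ) ℝ) :
    Matrix (Fin n₁ ⊕ Fin n₂) (Fin κ) ℝ :=
  (Real.sqrt 2)⁻¹ • Matrix.fromRows V W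

/-- `Z_t = (1/√2)[V_t; W_t]`. -/
def Zit (A : Fin m → Matrix (Fin n₁) (Fin n₂) ℝ) (X : Matrix (Fin n₁) (Fin n₂) ℝ)
    (μ : ℝ) (V₀ : Matrix (Fin n₁) (Fin k) ℝ) (W₀ : Matrix (Fin n₂) (Fin k) ℝ) (t : ℕ) :
    Matrix (Fin n₁ ⊕ Fin n₂) (Fin k) ℝ :=
  Zstack (iter A X μ V₀ W₀ t).1 (iter A X μ V₀ W₀ t).2

/-- `Z̃_t = (1/√2)[V_t; −W_t]`. -/
def Ztil (A : Fin m → Matrix (Fin n₁) (Fin n₂) ℝ) (X : Matrix (Fin n₁) (Fin n₂) ℝ)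
    (μ : ℝ) (V₀ : Matrix (Fin n₁) (Fin k) ℝ) (W₀ : Matrix (Fin n₂) (Fin k) ℝ) (t : ℕ) :
    Matrix (Fin n₁ ⊕ Fin n₂) (Fin k) ℝ :=
  Zstack (iter A X μ V₀ W₀ t).1 (-(iter A X μ V₀ W₀ t).2)

/-- `Δ_t = (Id − ℬ*ℬ)(Z_tZ_tᵀ − Z̃_tZ̃_tᵀ − sym(X))`. -/
def Δit (A : Fin m → Matrix (Fin n₁) (Fin n₂) ℝ) (X : Matrix (Fin n₁) (Fin n₂) ℝ)
    (μ : ℝ) (V₀ : Matrix (Fin n₁) (Fin k) ℝ) (W₀ : Matrix (Fin n₂) (Fin k) ℝ) (t : ℕ) :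
    Matrix (Fin n₁ ⊕ Fin n₂) (Fin n₁ ⊕ Fin n₂) ℝ :=
  let D := Zit A X μ V₀ W₀ t * (Zit A X μ V₀ W₀ t)ᵀ
    - Ztil A X μ V₀ W₀ t * (Ztil A X μ V₀ W₀ t)ᵀ - symMat X
  D - BstarB A D

/-- The block diagonal matrix `diag(Id_{n₁}, −Id_{n₂})`. -/
def flipSign (n₁ n₂ : ℕ) : Matrix (Fin n₁ ⊕ Fin n₂) (Fin n₁ ⊕ Fin n₂) ℝ :=
  Matrix.fromBlocks 1 0 0 (-1)

/-- Product Gaussian measure modelling the random initialization pair `(V, W)`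
with i.i.d. standard Gaussian entries. -/
def gaussPair (n₁ n₂ k : ℕ) :
    Measure ((Fin n₁ → Fin k → ℝ) × (Fin n₂ → Fin k → ℝ)) :=
  (Measure.pi fun _ : Fin n₁ => Measure.pi fun _ : Fin k => gaussianReal 0 1).prod
    (Measure.pi fun _ : Fin n₂ => Measure.pi fun _ : Fin k => gaussianReal 0 1)

section Toolbox1
variable {ι ι₁ ι₂ ι₃ : Type*} [Fintype ι] [Fintype ι₁] [Fintype ι₂] [Fintype ι₃]

def toE (v : ι → ℝ) : EuclideanSpace ℝ ι := WithLp.toLp 2 v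

lemma euclNorm_eq (v : ι → ℝ) : euclNorm v = ‖toE v‖ := by
  rw [EuclideanSpace.norm_eq]
  simp [euclNorm, toE, Real.norm_eq_abs, sq_abs]

lemma euclNorm_nonneg (v : ι → ℝ) : 0 ≤ euclNorm v := Real.sqrt_nonneg _

lemma euclNorm_zero : euclNorm (0 : ι → ℝ) = 0 := by simp [euclNorm]

lemma euclNorm_add_le (u v : ι → ℝ) : euclNorm (u + v) ≤ euclNorm u + euclNorm v := by
  rw [euclNorm_eq, euclNorm_eq, euclNorm_eq]
  simpa [toE] using norm_add_le (toE u) (toE v)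

lemma euclNorm_smul (c : ℝ) (v : ι → ℝ) : euclNorm (c • v) = |c| * euclNorm v := by
  rw [euclNorm_eq, euclNorm_eq]
  have : toE (c • v) = c • toE v := by simp [toE]
  rw [this, norm_smul, Real.norm_eq_abs]

lemma euclNorm_neg (v : ι → ℝ) : euclNorm (-v) = euclNorm v := by
  simp [euclNorm]

lemma sq_euclNorm (v : ι → ℝ) : euclNorm v ^ 2 = ∑ i, v i ^ 2 := by
  apply Real.sq_sqrt
  positivity

lemma dotProduct_self_eq (v : ι → ℝ) : v ⬝ᵥ v = euclNorm v ^ 2 := by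
  rw [sq_euclNorm]
  simp [dotProduct, pow_two]

lemma dotProduct_le (u v : ι → ℝ) : u ⬝ᵥ v ≤ euclNorm u * euclNorm v := by
  have h := real_inner_le_norm (toE u) (toE v)
  rw [euclNorm_eq, euclNorm_eq]
  simpa [PiLp.inner_apply, RCLike.inner_apply, dotProduct, toE, mul_comm] using h

/-- boundedness of the defining set of specNorm -/
lemma specSet_bddAbove (M : Matrix ι₁ ι₂ ℝ) :
    BddAbove {c : ℝ | ∃ x : ι₂ → ℝ, euclNorm x ≤ 1 ∧ c = euclNorm (M.mulVec x)} := by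
  classical
  refine ⟨Real.sqrt (∑ i, euclNorm (fun j => M i j) ^ 2), ?_⟩
  rintro c ⟨x, hx, rfl⟩
  have hrow : ∀ i, (M.mulVec x i) ^ 2 ≤ euclNorm (fun j => M i j) ^ 2 := by
    intro i
    have h1 : M.mulVec x i ≤ euclNorm (fun j => M i j) * euclNorm x :=
      dotProduct_le _ x
    have h2 : -(M.mulVec x i) ≤ euclNorm (fun j => M i j) * euclNorm x := by
      have := dotProduct_le (fun j => -(M i j)) x
      have hn : euclNorm (fun j => -(M i j)) = euclNorm (fun j => M i j) :=
        euclNorm_neg (fun j => M i j)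
      simpa [dotProduct, Matrix.mulVec, neg_mul, Finset.sum_neg_distrib, hn] using this
    have hnn := euclNorm_nonneg (fun j => M i j)
    have hxnn := euclNorm_nonneg x
    have hsq : (M.mulVec x i) ^ 2 ≤ ((euclNorm fun j => M i j) * euclNorm x) ^ 2 := by
      nlinarith
    have he2 : euclNorm x ^ 2 ≤ 1 := by nlinarith
    have hsq2 : ((euclNorm fun j => M i j) * euclNorm x) ^ 2 ≤ (euclNorm fun j => M i j) ^ 2 := by
      have := mul_nonneg (sq_nonneg (euclNorm fun j => M i j)) (by linarith : (0:ℝ) ≤ 1 - euclNorm x ^ 2)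
      nlinarith
    linarith
  unfold euclNorm
  apply Real.sqrt_le_sqrt
  exact Finset.sum_le_sum fun i _ => hrow i

lemma specSet_nonempty (M : Matrix ι₁ ι₂ ℝ) :
    Set.Nonempty {c : ℝ | ∃ x : ι₂ → ℝ, euclNorm x ≤ 1 ∧ c = euclNorm (M.mulVec x)} :=
  ⟨euclNorm (M.mulVec 0), 0, by simp [euclNorm_zero], rfl⟩

lemma specNorm_le {M : Matrix ι₁ ι₂ ℝ} {c : ℝ}
    (h : ∀ v : ι₂ → ℝ, euclNorm v ≤ 1 → euclNorm (M.mulVec v) ≤ c) : specNorm M ≤ c := by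
  apply csSup_le (specSet_nonempty M)
  rintro b ⟨x, hx, rfl⟩; exact h x hx

lemma le_specNorm {M : Matrix ι₁ ι₂ ℝ} {v : ι₂ → ℝ} (hv : euclNorm v ≤ 1) :
    euclNorm (M.mulVec v) ≤ specNorm M :=
  le_csSup (specSet_bddAbove M) ⟨v, hv, rfl⟩

lemma specNorm_nonneg (M : Matrix ι₁ ι₂ ℝ) : 0 ≤ specNorm M := by
  have := le_specNorm (M := M) (v := 0) (by simp [euclNorm_zero])
  have h0 := euclNorm_nonneg (M.mulVec 0)
  linarith

lemma euclNorm_mulVec_le (M : Matrix ι₁ ι₂ ℝ) (v : ι₂ → ℝ) :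
    euclNorm (M.mulVec v) ≤ specNorm M * euclNorm v := by
  rcases eq_or_ne (euclNorm v) 0 with h | h
  · -- v = 0
    have hv : v = 0 := by
      by_contra hne
      have : 0 < ∑ i, v i ^ 2 := by
        rcases Function.ne_iff.mp hne with ⟨i, hi⟩
        have : 0 < v i ^ 2 := lt_of_le_of_ne (sq_nonneg _) (Ne.symm (pow_ne_zero 2 hi))
        exact Finset.sum_pos' (fun j _ => sq_nonneg _) ⟨i, Finset.mem_univ i, this⟩
      have := Real.sqrt_pos.mpr this
      rw [show Real.sqrt (∑ i, v i ^ 2) = euclNorm v from rfl, h] at this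
      linarith
    simp [hv, euclNorm_zero, h]
  · have hpos : 0 < euclNorm v := lt_of_le_of_ne (euclNorm_nonneg v) (Ne.symm h)
    have key : euclNorm (M.mulVec ((euclNorm v)⁻¹ • v)) ≤ specNorm M := by
      apply le_specNorm
      rw [euclNorm_smul, abs_of_nonneg (inv_nonneg.mpr (euclNorm_nonneg v))]
      rw [inv_mul_cancel₀ h]
    rw [Matrix.mulVec_smul, euclNorm_smul, abs_of_nonneg (inv_nonneg.mpr (euclNorm_nonneg v))] at key
    calc euclNorm (M.mulVec v) = euclNorm v * ((euclNorm v)⁻¹ * euclNorm (M.mulVec v)) := by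
          field_simp
      _ ≤ euclNorm v * specNorm M := by
          apply mul_le_mul_of_nonneg_left key (le_of_lt hpos)
      _ = specNorm M * euclNorm v := mul_comm _ _

lemma specNorm_mul_le (M : Matrix ι₁ ι₂ ℝ) (N : Matrix ι₂ ι₃ ℝ) :
    specNorm (M * N) ≤ specNorm M * specNorm N := by
  apply specNorm_le
  intro v hv
  rw [← Matrix.mulVec_mulVec]
  calc euclNorm (M.mulVec (N.mulVec v)) ≤ specNorm M * euclNorm (N.mulVec v) :=
        euclNorm_mulVec_le _ _
    _ ≤ specNorm M * (specNorm N * euclNorm v) := by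
        apply mul_le_mul_of_nonneg_left (euclNorm_mulVec_le _ _) (specNorm_nonneg M)
    _ ≤ specNorm M * (specNorm N * 1) := by
        apply mul_le_mul_of_nonneg_left _ (specNorm_nonneg M)
        exact mul_le_mul_of_nonneg_left hv (specNorm_nonneg N)
    _ = specNorm M * specNorm N := by ring

lemma specNorm_add_le (M N : Matrix ι₁ ι₂ ℝ) :
    specNorm (M + N) ≤ specNorm M + specNorm N := by
  apply specNorm_le
  intro v hv
  rw [Matrix.add_mulVec]
  calc euclNorm (M.mulVec v + N.mulVec v) ≤ euclNorm (M.mulVec v) + euclNorm (N.mulVec v) :=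
        euclNorm_add_le _ _
    _ ≤ specNorm M + specNorm N := by
        have h1 := le_specNorm (M := M) hv
        have h2 := le_specNorm (M := N) hv
        linarith

lemma specNorm_smul (c : ℝ) (M : Matrix ι₁ ι₂ ℝ) : specNorm (c • M) ≤ |c| * specNorm M := by
  apply specNorm_le
  intro v hv
  rw [Matrix.smul_mulVec, euclNorm_smul]
  apply mul_le_mul_of_nonneg_left _ (abs_nonneg c)
  calc euclNorm (M.mulVec v) ≤ specNorm M * euclNorm v := euclNorm_mulVec_le _ _
    _ ≤ specNorm M * 1 := mul_le_mul_of_nonneg_left hv (specNorm_nonneg M)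
    _ = specNorm M := mul_one _

lemma specNorm_transpose_le (M : Matrix ι₁ ι₂ ℝ) : specNorm Mᵀ ≤ specNorm M := by
  apply specNorm_le
  intro v hv
  -- ‖Mᵀv‖² = ⟨v, M Mᵀ v⟩ ≤ ‖v‖ ‖M (Mᵀ v)‖ ≤ ‖M‖ ‖Mᵀ v‖
  set u := Mᵀ.mulVec v with hu
  have h1 : euclNorm u ^ 2 = v ⬝ᵥ M.mulVec u := by
    rw [Matrix.dotProduct_mulVec, ← Matrix.mulVec_transpose, ← hu, dotProduct_self_eq]
  have h2 : v ⬝ᵥ M.mulVec u ≤ euclNorm v * euclNorm (M.mulVec u) := dotProduct_le _ _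
  have h3 : euclNorm (M.mulVec u) ≤ specNorm M * euclNorm u := euclNorm_mulVec_le _ _
  have h4 : euclNorm u ^ 2 ≤ specNorm M * euclNorm u := by
    calc euclNorm u ^ 2 ≤ euclNorm v * euclNorm (M.mulVec u) := h1 ▸ h2
      _ ≤ 1 * (specNorm M * euclNorm u) := by
          apply mul_le_mul hv h3 (euclNorm_nonneg _) zero_le_one
      _ = specNorm M * euclNorm u := one_mul _
  rcases eq_or_lt_of_le (euclNorm_nonneg u) with h | h
  · rw [← h]; exact specNorm_nonneg M
  · nlinarith

lemma specNorm_transpose (M : Matrix ι₁ ι₂ ℝ) : specNorm Mᵀ = specNorm M := by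
  refine le_antisymm (specNorm_transpose_le M) ?_
  have := specNorm_transpose_le Mᵀ
  rwa [Matrix.transpose_transpose] at this

lemma specNorm_orth_le_one {M : Matrix ι₁ ι₂ ℝ} [DecidableEq ι₂] (h : Mᵀ * M = 1) :
    specNorm M ≤ 1 := by
  apply specNorm_le
  intro v hv
  have key : (M.mulVec v) ⬝ᵥ (M.mulVec v) = v ⬝ᵥ v := by
    rw [Matrix.dotProduct_mulVec, ← Matrix.mulVec_transpose, Matrix.mulVec_mulVec, h,
      Matrix.one_mulVec]
  have : euclNorm (M.mulVec v) ^ 2 = euclNorm v ^ 2 := by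
    rw [← dotProduct_self_eq, ← dotProduct_self_eq]; exact key
  have h1 := euclNorm_nonneg (M.mulVec v)
  have h2 := euclNorm_nonneg v
  nlinarith

end Toolbox1

section Toolbox2

variable {n₁ n₂ m k r : ℕ} {ι : Type*} [Fintype ι]

lemma le_of_sq {a b : ℝ} (hb : 0 ≤ b) (h : a ^ 2 ≤ b ^ 2) (ha : 0 ≤ a) : a ≤ b := by nlinarith

lemma sqrt2_inv_mul_self : (Real.sqrt 2)⁻¹ * (Real.sqrt 2)⁻¹ = 2⁻¹ := by
  rw [← mul_inv, Real.mul_self_sqrt (by norm_num : (0:ℝ) ≤ 2)]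

lemma Zstack_mul_transpose {κ : ℕ} (V : Matrix (Fin n₁) (Fin κ) ℝ) (W : Matrix (Fin n₂) (Fin κ) ℝ) :
    Zstack V W * (Zstack V W)ᵀ =
      (2:ℝ)⁻¹ • Matrix.fromBlocks (V * Vᵀ) (V * Wᵀ) (W * Vᵀ) (W * Wᵀ) := by
  unfold Zstack
  rw [Matrix.transpose_smul, Matrix.transpose_fromRows, Matrix.smul_mul, Matrix.mul_smul,
    smul_smul, sqrt2_inv_mul_self, Matrix.fromRows_mul_fromCols]

lemma symMat_sub (X Y : Matrix (Fin n₁) (Fin n₂) ℝ) : symMat (X - Y) = symMat X - symMat Y := by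
  unfold symMat
  ext (i | i) (j | j) <;> simp

lemma D_eq (A : Fin m → Matrix (Fin n₁) (Fin n₂) ℝ) (X : Matrix (Fin n₁) (Fin n₂) ℝ) (μ : ℝ)
    (V₀ : Matrix (Fin n₁) (Fin k) ℝ) (W₀ : Matrix (Fin n₂) (Fin k) ℝ) (t : ℕ) :
    Zit A X μ V₀ W₀ t * (Zit A X μ V₀ W₀ t)ᵀ - Ztil A X μ V₀ W₀ t * (Ztil A X μ V₀ W₀ t)ᵀ
      - symMat X = symMat ((iter A X μ V₀ W₀ t).1 * (iter A X μ V₀ W₀ t).2ᵀ - X) := by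
  unfold Zit Ztil
  rw [Zstack_mul_transpose, Zstack_mul_transpose, symMat_sub]
  set V := (iter A X μ V₀ W₀ t).1
  set W := (iter A X μ V₀ W₀ t).2
  ext (i | i) (j | j) <;>
    simp [symMat, Matrix.sub_apply, Matrix.smul_apply, Matrix.neg_apply, Matrix.mul_neg,
      Matrix.neg_mul, Matrix.transpose_neg, smul_eq_mul] <;> ring

lemma minner_smul_left {ι₁ ι₂ : Type*} [Fintype ι₁] [Fintype ι₂] (c : ℝ)
    (M N : Matrix ι₁ ι₂ ℝ) : minner (c • M) N = c * minner M N := by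
  simp [minner, Finset.mul_sum, mul_assoc]

lemma minner_symMat (P N : Matrix (Fin n₁) (Fin n₂) ℝ) :
    minner (Matrix.fromBlocks 0 P Pᵀ (0 : Matrix (Fin n₂) (Fin n₂) ℝ)) (symMat N)
      = 2 * minner P N := by
  unfold symMat minner
  rw [Fintype.sum_sum_type]
  simp only [Fintype.sum_sum_type, Matrix.fromBlocks_apply₁₁, Matrix.fromBlocks_apply₁₂,
    Matrix.fromBlocks_apply₂₁, Matrix.fromBlocks_apply₂₂, Matrix.zero_apply, zero_mul,
    Finset.sum_const_zero, zero_add, add_zero, Matrix.transpose_apply]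
  have h : ∑ i : Fin n₂, ∑ j : Fin n₁, P j i * N j i
      = ∑ j : Fin n₁, ∑ i : Fin n₂, P j i * N j i := Finset.sum_comm
  rw [h]
  ring

lemma BstarB_symMat (A : Fin m → Matrix (Fin n₁) (Fin n₂) ℝ) (N : Matrix (Fin n₁) (Fin n₂) ℝ) :
    BstarB A (symMat N) = symMat (AstarA A N) := by
  unfold BstarB
  have hterm : ∀ i : Fin m, minner (Bmat A i) (symMat N) • Bmat A i
      = minner (A i) N • Matrix.fromBlocks 0 (A i) (A i)ᵀ (0 : Matrix (Fin n₂) (Fin n₂) ℝ) := by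
    intro i
    unfold Bmat
    rw [minner_smul_left, minner_symMat, smul_smul]
    congr 1
    linear_combination (2 * minner (A i) N) * sqrt2_inv_mul_self
  rw [Finset.sum_congr rfl (fun i _ => hterm i)]
  unfold AstarA symMat
  ext (i | i) (j | j) <;>
    simp [Matrix.sum_apply, Matrix.smul_apply, Matrix.transpose_apply, smul_eq_mul]

lemma step_eq (A : Fin m → Matrix (Fin n₁) (Fin n₂) ℝ) (X : Matrix (Fin n₁) (Fin n₂) ℝ) (μ : ℝ)
    (V₀ : Matrix (Fin n₁) (Fin k) ℝ) (W₀ : Matrix (Fin n₂) (Fin k) ℝ) (t : ℕ) :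
    Zit A X μ V₀ W₀ (t+1) = Zit A X μ V₀ W₀ t
      - μ • (symMat (AstarA A ((iter A X μ V₀ W₀ t).1 * (iter A X μ V₀ W₀ t).2ᵀ - X))
          * Zit A X μ V₀ W₀ t) := by
  set V := (iter A X μ V₀ W₀ t).1 with hV
  set W := (iter A X μ V₀ W₀ t).2 with hW
  set G := AstarA A (V * Wᵀ - X) with hG
  have hit : iter A X μ V₀ W₀ (t+1) = (V - μ • (G * W), W - μ • (Gᵀ * V)) := rfl
  unfold Zit
  rw [hit]
  unfold Zstack symMat
  rw [Matrix.mul_smul, Matrix.fromBlocks_mul_fromRows]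
  ext (i | i) j <;>
    simp [Matrix.smul_apply, Matrix.sub_apply, smul_eq_mul] <;> ring

lemma update_eq (A : Fin m → Matrix (Fin n₁) (Fin n₂) ℝ) (X : Matrix (Fin n₁) (Fin n₂) ℝ) (μ : ℝ)
    (V₀ : Matrix (Fin n₁) (Fin k) ℝ) (W₀ : Matrix (Fin n₂) (Fin k) ℝ) (t : ℕ) :
    Zit A X μ V₀ W₀ (t+1)
      = Zit A X μ V₀ W₀ t
        + μ • ((symMat X - Zit A X μ V₀ W₀ t * (Zit A X μ V₀ W₀ t)ᵀ
            + Ztil A X μ V₀ W₀ t * (Ztil A X μ V₀ W₀ t)ᵀ) * Zit A X μ V₀ W₀ t)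
        + μ • (Δit A X μ V₀ W₀ t * Zit A X μ V₀ W₀ t) := by
  set Z := Zit A X μ V₀ W₀ t with hZ
  set Z' := Ztil A X μ V₀ W₀ t with hZ'
  set D := Z * Zᵀ - Z' * Z'ᵀ - symMat X with hD
  have hΔ : Δit A X μ V₀ W₀ t = D - BstarB A D := rfl
  have hsym : symMat (AstarA A ((iter A X μ V₀ W₀ t).1 * (iter A X μ V₀ W₀ t).2ᵀ - X))
      = D - Δit A X μ V₀ W₀ t := by
    rw [← BstarB_symMat, ← D_eq A X μ V₀ W₀ t, hΔ, ← hZ, ← hZ', ← hD]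
    abel
  rw [step_eq A X μ V₀ W₀ t, hsym, ← hZ]
  have hnD : symMat X - Z * Zᵀ + Z' * Z'ᵀ = -D := by rw [hD]; abel
  rw [hnD, Matrix.sub_mul, Matrix.neg_mul, smul_sub, smul_neg]
  abel

lemma Ztil_eq_flip (A : Fin m → Matrix (Fin n₁) (Fin n₂) ℝ) (X : Matrix (Fin n₁) (Fin n₂) ℝ)
    (μ : ℝ) (V₀ : Matrix (Fin n₁) (Fin k) ℝ) (W₀ : Matrix (Fin n₂) (Fin k) ℝ) (t : ℕ) :
    Ztil A X μ V₀ W₀ t = flipSign n₁ n₂ * Zit A X μ V₀ W₀ t := by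
  unfold Ztil Zit Zstack flipSign
  rw [Matrix.mul_smul, Matrix.fromBlocks_mul_fromRows]
  ext (i | i) j <;> simp

lemma flipSign_transpose : (flipSign n₁ n₂)ᵀ = flipSign n₁ n₂ := by
  unfold flipSign
  rw [Matrix.fromBlocks_transpose]
  simp

lemma flipSign_mul_self : flipSign n₁ n₂ * flipSign n₁ n₂ = 1 := by
  unfold flipSign
  rw [Matrix.fromBlocks_multiply]
  simp [Matrix.fromBlocks_one]

lemma euclNorm_elim_sq (x : Fin n₁ → ℝ) (y : Fin n₂ → ℝ) :
    euclNorm (Sum.elim x y) ^ 2 = euclNorm x ^ 2 + euclNorm y ^ 2 := by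
  rw [sq_euclNorm, sq_euclNorm, sq_euclNorm, Fintype.sum_sum_type]
  rfl

lemma euclNorm_comp_sq (v : (Fin n₁ ⊕ Fin n₂) → ℝ) :
    euclNorm v ^ 2 = euclNorm (v ∘ Sum.inl) ^ 2 + euclNorm (v ∘ Sum.inr) ^ 2 := by
  rw [sq_euclNorm, sq_euclNorm, sq_euclNorm, Fintype.sum_sum_type]
  rfl

lemma euclNorm_flip_mulVec (w : (Fin n₁ ⊕ Fin n₂) → ℝ) :
    euclNorm ((flipSign n₁ n₂).mulVec w) = euclNorm w := by
  unfold flipSign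
  rw [Matrix.fromBlocks_mulVec]
  simp only [Matrix.zero_mulVec, Matrix.one_mulVec, Matrix.neg_mulVec, add_zero, zero_add]
  unfold euclNorm
  rw [Fintype.sum_sum_type, Fintype.sum_sum_type]
  simp

lemma specNorm_flip_mul (M : Matrix (Fin n₁ ⊕ Fin n₂) ι ℝ) :
    specNorm (flipSign n₁ n₂ * M) = specNorm M := by
  apply le_antisymm
  · apply specNorm_le
    intro v hv
    rw [← Matrix.mulVec_mulVec, euclNorm_flip_mulVec]
    exact le_specNorm hv
  · apply specNorm_le
    intro v hv
    have hM : M = flipSign n₁ n₂ * (flipSign n₁ n₂ * M) := by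
      rw [← Matrix.mul_assoc, flipSign_mul_self, Matrix.one_mul]
    calc euclNorm (M.mulVec v) = euclNorm ((flipSign n₁ n₂ * (flipSign n₁ n₂ * M)).mulVec v) := by
          rw [← hM]
      _ = euclNorm ((flipSign n₁ n₂ * M).mulVec v) := by
          rw [← Matrix.mulVec_mulVec, euclNorm_flip_mulVec]
      _ ≤ specNorm (flipSign n₁ n₂ * M) := le_specNorm hv

lemma specNorm_symMat_le (X : Matrix (Fin n₁) (Fin n₂) ℝ) :
    specNorm (symMat X) ≤ specNorm X := by
  apply specNorm_le
  intro v hv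
  unfold symMat
  rw [Matrix.fromBlocks_mulVec]
  simp only [Matrix.zero_mulVec, add_zero, zero_add]
  apply le_of_sq (specNorm_nonneg X) _ (euclNorm_nonneg _)
  rw [euclNorm_elim_sq]
  have h1 : euclNorm (X.mulVec (v ∘ Sum.inr)) ≤ specNorm X * euclNorm (v ∘ Sum.inr) :=
    euclNorm_mulVec_le _ _
  have h2 : euclNorm (Xᵀ.mulVec (v ∘ Sum.inl)) ≤ specNorm X * euclNorm (v ∘ Sum.inl) := by
    have := euclNorm_mulVec_le Xᵀ (v ∘ Sum.inl)
    rwa [specNorm_transpose] at this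
  have h3 : euclNorm (v ∘ Sum.inl) ^ 2 + euclNorm (v ∘ Sum.inr) ^ 2 ≤ 1 := by
    have := euclNorm_comp_sq v
    have hnn := euclNorm_nonneg v
    nlinarith
  have e1 := euclNorm_nonneg (X.mulVec (v ∘ Sum.inr))
  have e2 := euclNorm_nonneg (Xᵀ.mulVec (v ∘ Sum.inl))
  have e3 := euclNorm_nonneg (v ∘ Sum.inl)
  have e4 := euclNorm_nonneg (v ∘ Sum.inr)
  have e5 := specNorm_nonneg X
  nlinarith [sq_nonneg (specNorm X * euclNorm (v ∘ Sum.inr)),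
    sq_nonneg (specNorm X * euclNorm (v ∘ Sum.inl))]


lemma Zstack_transpose_mul {κ κ' : ℕ} (V : Matrix (Fin n₁) (Fin κ) ℝ)
    (W : Matrix (Fin n₂) (Fin κ) ℝ) (V' : Matrix (Fin n₁) (Fin κ') ℝ)
    (W' : Matrix (Fin n₂) (Fin κ') ℝ) :
    (Zstack V W)ᵀ * Zstack V' W' = (2:ℝ)⁻¹ • (Vᵀ * V' + Wᵀ * W') := by
  unfold Zstack
  rw [Matrix.transpose_smul, Matrix.transpose_fromRows, Matrix.smul_mul, Matrix.mul_smul,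
    smul_smul, sqrt2_inv_mul_self, Matrix.fromCols_mul_fromRows]

end Toolbox2

section Toolbox3

variable {ι₁ ι₂ ι₃ ι₄ : Type*} [Fintype ι₁] [Fintype ι₂] [Fintype ι₃] [Fintype ι₄]

lemma specNorm_mul_le2 (M : Matrix ι₁ ι₂ ℝ) (N : Matrix ι₂ ι₃ ℝ) {c d : ℝ}
    (hM : specNorm M ≤ c) (hN : specNorm N ≤ d) (hc : 0 ≤ c) :
    specNorm (M * N) ≤ c * d :=
  le_trans (specNorm_mul_le M N) (mul_le_mul hM hN (specNorm_nonneg N) hc)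

lemma specNorm_conj_le (Q1 : Matrix ι₁ ι₂ ℝ) (M : Matrix ι₂ ι₃ ℝ) (Q2 : Matrix ι₃ ι₄ ℝ) {c : ℝ}
    (h1 : specNorm Q1 ≤ 1) (hM : specNorm M ≤ c) (h2 : specNorm Q2 ≤ 1) :
    specNorm (Q1 * M * Q2) ≤ c := by
  have hc : 0 ≤ c := le_trans (specNorm_nonneg M) hM
  have step1 : specNorm (Q1 * M) ≤ 1 * c := specNorm_mul_le2 Q1 M h1 hM zero_le_one
  have step2 : specNorm (Q1 * M * Q2) ≤ (1 * c) * 1 :=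
    specNorm_mul_le2 (Q1 * M) Q2 step1 h2 (by linarith)
  linarith

set_option maxHeartbeats 1000000 in
/-- contraction estimate for the gradient-flow term -/
lemma contraction_bound (Z : Matrix ι₁ ι₂ ℝ) {μ s : ℝ}
    (hμ0 : 0 ≤ μ) (hs0 : 0 ≤ s) (hs : specNorm Z ≤ s) (hμs : μ * s ^ 2 ≤ 1 / 2) :
    specNorm (Z - μ • (Z * Zᵀ * Z)) ≤ Real.sqrt (s ^ 2 - μ * s ^ 4) := by
  have hkey : 0 ≤ s ^ 2 - μ * s ^ 4 := by nlinarith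
  apply specNorm_le
  intro v hv
  apply le_of_sq (Real.sqrt_nonneg _) _ (euclNorm_nonneg _)
  rw [Real.sq_sqrt hkey]
  set w := Z.mulVec v with hw
  set u := Zᵀ.mulVec w with hu
  have hvec : (Z - μ • (Z * Zᵀ * Z)).mulVec v = w - μ • Z.mulVec u := by
    rw [Matrix.sub_mulVec, Matrix.smul_mulVec]
    congr 2
    rw [← Matrix.mulVec_mulVec, ← Matrix.mulVec_mulVec, ← hw, ← hu]
  rw [hvec]
  -- expand the square
  have expand : euclNorm (w - μ • Z.mulVec u) ^ 2
      = euclNorm w ^ 2 - 2 * μ * (w ⬝ᵥ Z.mulVec u) + μ ^ 2 * euclNorm (Z.mulVec u) ^ 2 := by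
    rw [← dotProduct_self_eq, ← dotProduct_self_eq, ← dotProduct_self_eq]
    simp only [sub_dotProduct, dotProduct_sub, smul_dotProduct,
      dotProduct_smul, smul_eq_mul]
    have hcomm : Z.mulVec u ⬝ᵥ w = w ⬝ᵥ Z.mulVec u := dotProduct_comm _ _
    rw [hcomm]
    ring
  have hwu : w ⬝ᵥ Z.mulVec u = euclNorm u ^ 2 := by
    rw [Matrix.dotProduct_mulVec, ← Matrix.mulVec_transpose, ← hu, dotProduct_self_eq]
  have hZu : euclNorm (Z.mulVec u) ≤ s * euclNorm u := by
    calc euclNorm (Z.mulVec u) ≤ specNorm Z * euclNorm u := euclNorm_mulVec_le _ _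
      _ ≤ s * euclNorm u := mul_le_mul_of_nonneg_right hs (euclNorm_nonneg u)
  have hw_le : euclNorm w ≤ s := by
    calc euclNorm w ≤ specNorm Z * euclNorm v := euclNorm_mulVec_le _ _
      _ ≤ s * 1 := mul_le_mul hs hv (euclNorm_nonneg v) hs0
      _ = s := mul_one s
  have hw2 : euclNorm w ^ 2 ≤ euclNorm u := by
    have hvu : v ⬝ᵥ u = w ⬝ᵥ w := by
      rw [hu, Matrix.dotProduct_mulVec, Matrix.vecMul_transpose, ← hw]
    have hcs : v ⬝ᵥ u ≤ euclNorm v * euclNorm u := dotProduct_le v u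
    have : euclNorm w ^ 2 ≤ euclNorm v * euclNorm u := by
      rw [← dotProduct_self_eq, ← hvu]; exact hcs
    have h1 : euclNorm v * euclNorm u ≤ 1 * euclNorm u :=
      mul_le_mul_of_nonneg_right hv (euclNorm_nonneg u)
    linarith
  rw [expand, hwu]
  have eu := euclNorm_nonneg u
  have ew := euclNorm_nonneg w
  have eZu := euclNorm_nonneg (Z.mulVec u)
  have k1 : μ ^ 2 * euclNorm (Z.mulVec u) ^ 2 ≤ μ ^ 2 * (s ^ 2 * euclNorm u ^ 2) := by
    have : euclNorm (Z.mulVec u) ^ 2 ≤ (s * euclNorm u) ^ 2 := by nlinarith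
    nlinarith [sq_nonneg μ]
  have k2 : euclNorm w ^ 4 ≤ euclNorm u ^ 2 := by nlinarith
  have k3 : μ ^ 2 * (s ^ 2 * euclNorm u ^ 2) ≤ (1/2) * (μ * euclNorm u ^ 2) := by
    nlinarith [mul_nonneg hμ0 (sq_nonneg (euclNorm u))]
  have k4 : μ * euclNorm w ^ 4 ≤ μ * euclNorm u ^ 2 :=
    mul_le_mul_of_nonneg_left k2 hμ0
  have k5 : euclNorm w ^ 2 ≤ s ^ 2 := by nlinarith
  have k6 : (s ^ 2 - euclNorm w ^ 2) * (1 - μ * (euclNorm w ^ 2 + s ^ 2)) ≥ 0 := by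
    apply mul_nonneg (by linarith)
    nlinarith [mul_nonneg hμ0 (sq_nonneg (euclNorm w))]
  nlinarith [k1, k3, k4, k6, mul_nonneg hμ0 (sq_nonneg (euclNorm u))]

lemma final_numeric {μ s q b : ℝ} (hμ : 0 < μ) (hq0 : 0 ≤ q) (hs0 : 0 ≤ s)
    (hs2q : s ≤ 2 * q) (hμq : μ * q ^ 2 ≤ 1 / 100) (hμs2 : μ * s ^ 2 ≤ 1 / 2)
    (hb0 : 0 ≤ b) (hb2 : b ^ 2 = s ^ 2 - μ * s ^ 4) :
    b + (μ * (q ^ 2 * s)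
      + (μ * (s * ((201/10000) * s ^ 2 + (2/100) * (s * q) + (1/10000) * q ^ 2))
      + μ * ((q ^ 2 / 100) * s))) ≤ 2 * q := by
  have hble : b ≤ s - μ * s ^ 3 / 2 := by
    have hrhs : 0 ≤ s - μ * s ^ 3 / 2 := by nlinarith
    nlinarith [sq_nonneg (μ * s ^ 3)]
  have hμs3 : 0 ≤ μ * (s * s ^ 2) := by positivity
  by_cases hcase : s ^ 2 ≤ (231/100) * q ^ 2
  · have hs152 : s ≤ (152/100) * q := by nlinarith
    have A1 : μ * (s * q ^ 2) ≤ (1/100) * s := by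
      have := mul_le_mul_of_nonneg_right hμq hs0
      linarith [this]
    have A2 : μ * (s * s ^ 2) ≤ (231/100) * ((1/100) * s) := by
      have k1 := mul_le_mul_of_nonneg_left hcase (mul_nonneg hμ.le hs0)
      have k2 := mul_le_mul_of_nonneg_right hμq hs0
      linarith [k1, k2]
    have A3 : μ * (s * (s * q)) ≤ (152/100) * ((1/100) * s) := by
      have hsq : s * q ≤ (152/100) * q ^ 2 := by nlinarith [hs152, hq0]
      have k1 := mul_le_mul_of_nonneg_left hsq (mul_nonneg hμ.le hs0)
      have k2 := mul_le_mul_of_nonneg_right hμq hs0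
      linarith [k1, k2]
    have hbles : b ≤ s := by linarith [hble, hμs3]
    linarith [hbles, A1, A2, A3, hs152, hq0]
  · push_neg at hcase
    have hq23 : q ≤ (2/3) * s := by
      nlinarith [sq_nonneg (s - (3/2) * q), sq_nonneg (s + (3/2) * q)]
    have hq2s : q ^ 2 ≤ (4/9) * s ^ 2 := by
      have := mul_le_mul hq23 hq23 hq0 (by positivity)
      linarith [this]
    have C1 : μ * (s * q ^ 2) ≤ (4/9) * (μ * (s * s ^ 2)) := by
      have := mul_le_mul_of_nonneg_left hq2s (mul_nonneg hμ.le hs0)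
      linarith [this]
    have C2 : μ * (s * (s * q)) ≤ (2/3) * (μ * (s * s ^ 2)) := by
      have := mul_le_mul_of_nonneg_left hq23 (mul_nonneg (mul_nonneg hμ.le hs0) hs0)
      linarith [this]
    linarith [hble, C1, C2, hμs3, hs2q]

end Toolbox3

section Toolbox4

variable {n₁ n₂ k r₂ r₃ : ℕ} {r : ℕ}

set_option maxHeartbeats 1000000 in
/-- the key decomposition bound for `‖Zᵀ (F Z)‖`. -/
lemma ZFZ_bound (Zt : Matrix (Fin n₁ ⊕ Fin n₂) (Fin k) ℝ)
    (LX : Matrix (Fin n₁ ⊕ Fin n₂) (Fin r) ℝ) (LXp : Matrix (Fin n₁ ⊕ Fin n₂) (Fin r₂) ℝ)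
    (Qt : Matrix (Fin k) (Fin r) ℝ) (Qtp : Matrix (Fin k) (Fin r₃) ℝ)
    (PZ : Matrix (Fin n₁ ⊕ Fin n₂) (Fin r) ℝ)
    (hLX1 : LXᵀ * LX = 1) (hLXp1 : LXpᵀ * LXp = 1)
    (hLL : LX * LXᵀ + LXp * LXpᵀ = 1)
    (hQQ : Qt * Qtᵀ + Qtp * Qtpᵀ = 1)
    (hQt1 : Qtᵀ * Qt = 1) (hQtp1 : Qtpᵀ * Qtp = 1)
    (hPZ1 : PZᵀ * PZ = 1) (hPZ3 : PZ * PZᵀ * (Zt * Qt) = Zt * Qt)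
    (hLFL : LXᵀ * (flipSign n₁ n₂ * LX) = 0)
    {s q : ℝ} (hq : 0 ≤ q) (hs0 : 0 ≤ s)
    (hs : specNorm Zt ≤ s) (hE : specNorm (Zt * Qtp) ≤ q / 100)
    (hD : specNorm (LXpᵀ * PZ) ≤ 1 / 100) :
    specNorm (Ztᵀ * (flipSign n₁ n₂ * Zt))
      ≤ (201/10000) * s ^ 2 + (2/100) * (s * q) + (1/10000) * q ^ 2 := by
  -- orthonormal-column norms
  have nLX : specNorm LX ≤ 1 := specNorm_orth_le_one hLX1
  have nLXp : specNorm LXp ≤ 1 := specNorm_orth_le_one hLXp1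
  have nQt : specNorm Qt ≤ 1 := specNorm_orth_le_one hQt1
  have nQtp : specNorm Qtp ≤ 1 := specNorm_orth_le_one hQtp1
  have nPZ : specNorm PZ ≤ 1 := specNorm_orth_le_one hPZ1
  have nLXt : specNorm LXᵀ ≤ 1 := by rw [specNorm_transpose]; exact nLX
  have nLXpt : specNorm LXpᵀ ≤ 1 := by rw [specNorm_transpose]; exact nLXp
  have nQtt : specNorm Qtᵀ ≤ 1 := by rw [specNorm_transpose]; exact nQt
  have nQtpt : specNorm Qtpᵀ ≤ 1 := by rw [specNorm_transpose]; exact nQtp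
  have nPZt : specNorm PZᵀ ≤ 1 := by rw [specNorm_transpose]; exact nPZ
  -- PZ decomposition
  have hPZdec : PZ = LX * (LXᵀ * PZ) + LXp * (LXpᵀ * PZ) := by
    rw [← Matrix.mul_assoc, ← Matrix.mul_assoc, ← Matrix.add_mul, hLL, Matrix.one_mul]
  set C := LXᵀ * PZ with hC
  set D := LXpᵀ * PZ with hDdef
  have nC : specNorm C ≤ 1 := by
    have := specNorm_mul_le2 LXᵀ PZ nLXt nPZ zero_le_one
    rw [hC]; linarith
  have nCt : specNorm Cᵀ ≤ 1 := by rw [specNorm_transpose]; exact nC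
  have nDt : specNorm Dᵀ ≤ 1 / 100 := by rw [specNorm_transpose]; exact hD
  -- expansion of PZᵀ F PZ
  have hPZexp : PZᵀ * (flipSign n₁ n₂ * PZ) =
      Cᵀ * (LXᵀ * (flipSign n₁ n₂ * (LX * C))) + Cᵀ * (LXᵀ * (flipSign n₁ n₂ * (LXp * D)))
      + Dᵀ * (LXpᵀ * (flipSign n₁ n₂ * (LX * C)))
      + Dᵀ * (LXpᵀ * (flipSign n₁ n₂ * (LXp * D))) := by
    conv_lhs => rw [hPZdec]
    simp only [Matrix.transpose_add, Matrix.transpose_mul, Matrix.mul_add, Matrix.add_mul,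
      Matrix.mul_assoc, Matrix.transpose_transpose]
    abel
  have hzero : Cᵀ * (LXᵀ * (flipSign n₁ n₂ * (LX * C))) = 0 := by
    rw [← Matrix.mul_assoc (flipSign n₁ n₂) LX C, ← Matrix.mul_assoc LXᵀ _ C, hLFL,
      Matrix.zero_mul, Matrix.mul_zero]
  have hPZF : specNorm (PZᵀ * (flipSign n₁ n₂ * PZ)) ≤ 201/10000 := by
    rw [hPZexp, hzero, zero_add]
    have b2 : specNorm (Cᵀ * (LXᵀ * (flipSign n₁ n₂ * (LXp * D)))) ≤ 1/100 := by
      have hin : specNorm (flipSign n₁ n₂ * (LXp * D)) ≤ 1/100 := by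
        rw [specNorm_flip_mul]
        have := specNorm_mul_le2 LXp D nLXp hD zero_le_one
        linarith
      have h1 : specNorm (LXᵀ * (flipSign n₁ n₂ * (LXp * D))) ≤ 1 * (1/100) :=
        specNorm_mul_le2 _ _ nLXt hin zero_le_one
      have h2 : specNorm (Cᵀ * (LXᵀ * (flipSign n₁ n₂ * (LXp * D)))) ≤ 1 * (1 * (1/100)) :=
        specNorm_mul_le2 _ _ nCt (by linarith) zero_le_one
      linarith
    have b3 : specNorm (Dᵀ * (LXpᵀ * (flipSign n₁ n₂ * (LX * C)))) ≤ 1/100 := by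
      have hin : specNorm (flipSign n₁ n₂ * (LX * C)) ≤ 1 := by
        rw [specNorm_flip_mul]
        have := specNorm_mul_le2 LX C nLX nC zero_le_one
        linarith
      have h1 : specNorm (LXpᵀ * (flipSign n₁ n₂ * (LX * C))) ≤ 1 * 1 :=
        specNorm_mul_le2 _ _ nLXpt hin zero_le_one
      have h2 : specNorm (Dᵀ * (LXpᵀ * (flipSign n₁ n₂ * (LX * C)))) ≤ (1/100) * (1 * 1) :=
        specNorm_mul_le2 _ _ nDt h1 (by norm_num)
      linarith
    have b4 : specNorm (Dᵀ * (LXpᵀ * (flipSign n₁ n₂ * (LXp * D)))) ≤ 1/10000 := by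
      have hin : specNorm (flipSign n₁ n₂ * (LXp * D)) ≤ 1/100 := by
        rw [specNorm_flip_mul]
        have := specNorm_mul_le2 LXp D nLXp hD zero_le_one
        linarith
      have h1 : specNorm (LXpᵀ * (flipSign n₁ n₂ * (LXp * D))) ≤ 1 * (1/100) :=
        specNorm_mul_le2 _ _ nLXpt hin zero_le_one
      have h2 : specNorm (Dᵀ * (LXpᵀ * (flipSign n₁ n₂ * (LXp * D)))) ≤ (1/100) * (1 * (1/100)) :=
        specNorm_mul_le2 _ _ nDt h1 (by norm_num)
      linarith
    have t1 := specNorm_add_le (Cᵀ * (LXᵀ * (flipSign n₁ n₂ * (LXp * D))))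
      (Dᵀ * (LXpᵀ * (flipSign n₁ n₂ * (LX * C))))
    have t2 := specNorm_add_le (Cᵀ * (LXᵀ * (flipSign n₁ n₂ * (LXp * D)))
      + Dᵀ * (LXpᵀ * (flipSign n₁ n₂ * (LX * C))))
      (Dᵀ * (LXpᵀ * (flipSign n₁ n₂ * (LXp * D))))
    linarith
  -- Y = PZ * R
  have hY : Zt * Qt = PZ * (PZᵀ * (Zt * Qt)) := by
    rw [← Matrix.mul_assoc]; exact hPZ3.symm
  set R := PZᵀ * (Zt * Qt) with hR
  have nZQt : specNorm (Zt * Qt) ≤ s := by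
    have := specNorm_mul_le2 Zt Qt hs nQt hs0
    linarith
  have nR : specNorm R ≤ s := by
    have := specNorm_mul_le2 PZᵀ (Zt * Qt) nPZt nZQt zero_le_one
    rw [hR]; linarith
  have nRt : specNorm Rᵀ ≤ s := by rw [specNorm_transpose]; exact nR
  -- inner bound for the (Qt,Qt) block
  have hYFY : specNorm ((Zt * Qt)ᵀ * (flipSign n₁ n₂ * (Zt * Qt))) ≤ s * ((201/10000) * s) := by
    have hform : (Zt * Qt)ᵀ * (flipSign n₁ n₂ * (Zt * Qt))
        = Rᵀ * ((PZᵀ * (flipSign n₁ n₂ * PZ)) * R) := by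
      conv_lhs => rw [hY]
      simp only [Matrix.transpose_mul, Matrix.mul_assoc, Matrix.transpose_transpose]
    rw [hform]
    have h1 : specNorm ((PZᵀ * (flipSign n₁ n₂ * PZ)) * R) ≤ (201/10000) * s :=
      specNorm_mul_le2 _ _ hPZF nR (by norm_num)
    exact specNorm_mul_le2 _ _ nRt h1 hs0
  -- main expansion
  have hZdec : Zt = Zt * Qt * Qtᵀ + Zt * Qtp * Qtpᵀ := by
    rw [Matrix.mul_assoc, Matrix.mul_assoc, ← Matrix.mul_add, hQQ, Matrix.mul_one]
  have hexp : Ztᵀ * (flipSign n₁ n₂ * Zt) =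
      Qt * ((Zt * Qt)ᵀ * (flipSign n₁ n₂ * (Zt * Qt))) * Qtᵀ
      + Qt * ((Zt * Qt)ᵀ * (flipSign n₁ n₂ * (Zt * Qtp))) * Qtpᵀ
      + Qtp * ((Zt * Qtp)ᵀ * (flipSign n₁ n₂ * (Zt * Qt))) * Qtᵀ
      + Qtp * ((Zt * Qtp)ᵀ * (flipSign n₁ n₂ * (Zt * Qtp))) * Qtpᵀ := by
    conv_lhs => rw [hZdec]
    simp only [Matrix.transpose_add, Matrix.transpose_mul, Matrix.mul_add, Matrix.add_mul,
      Matrix.mul_assoc, Matrix.transpose_transpose]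
    abel
  have nZQtT : specNorm (Zt * Qt)ᵀ ≤ s := by rw [specNorm_transpose]; exact nZQt
  have nZQtpT : specNorm (Zt * Qtp)ᵀ ≤ q / 100 := by rw [specNorm_transpose]; exact hE
  have nFZQt : specNorm (flipSign n₁ n₂ * (Zt * Qt)) ≤ s := by rw [specNorm_flip_mul]; exact nZQt
  have nFZQtp : specNorm (flipSign n₁ n₂ * (Zt * Qtp)) ≤ q / 100 := by
    rw [specNorm_flip_mul]; exact hE
  have bT1 : specNorm (Qt * ((Zt * Qt)ᵀ * (flipSign n₁ n₂ * (Zt * Qt))) * Qtᵀ)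
      ≤ s * ((201/10000) * s) := specNorm_conj_le _ _ _ nQt hYFY nQtt
  have bT2 : specNorm (Qt * ((Zt * Qt)ᵀ * (flipSign n₁ n₂ * (Zt * Qtp))) * Qtpᵀ)
      ≤ s * (q / 100) :=
    specNorm_conj_le _ _ _ nQt (specNorm_mul_le2 _ _ nZQtT nFZQtp hs0) nQtpt
  have bT3 : specNorm (Qtp * ((Zt * Qtp)ᵀ * (flipSign n₁ n₂ * (Zt * Qt))) * Qtᵀ)
      ≤ (q / 100) * s :=
    specNorm_conj_le _ _ _ nQtp (specNorm_mul_le2 _ _ nZQtpT nFZQt (by positivity)) nQtt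
  have bT4 : specNorm (Qtp * ((Zt * Qtp)ᵀ * (flipSign n₁ n₂ * (Zt * Qtp))) * Qtpᵀ)
      ≤ (q / 100) * (q / 100) :=
    specNorm_conj_le _ _ _ nQtp (specNorm_mul_le2 _ _ nZQtpT nFZQtp (by positivity)) nQtpt
  rw [hexp]
  have tr1 := specNorm_add_le
    (Qt * ((Zt * Qt)ᵀ * (flipSign n₁ n₂ * (Zt * Qt))) * Qtᵀ)
    (Qt * ((Zt * Qt)ᵀ * (flipSign n₁ n₂ * (Zt * Qtp))) * Qtpᵀ)
  have tr2 := specNorm_add_le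
    (Qt * ((Zt * Qt)ᵀ * (flipSign n₁ n₂ * (Zt * Qt))) * Qtᵀ
      + Qt * ((Zt * Qt)ᵀ * (flipSign n₁ n₂ * (Zt * Qtp))) * Qtpᵀ)
    (Qtp * ((Zt * Qtp)ᵀ * (flipSign n₁ n₂ * (Zt * Qt))) * Qtᵀ)
  have tr3 := specNorm_add_le
    (Qt * ((Zt * Qt)ᵀ * (flipSign n₁ n₂ * (Zt * Qt))) * Qtᵀ
      + Qt * ((Zt * Qt)ᵀ * (flipSign n₁ n₂ * (Zt * Qtp))) * Qtpᵀ
      + Qtp * ((Zt * Qtp)ᵀ * (flipSign n₁ n₂ * (Zt * Qt))) * Qtᵀ)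
    (Qtp * ((Zt * Qtp)ᵀ * (flipSign n₁ n₂ * (Zt * Qtp))) * Qtpᵀ)
  nlinarith [sq_nonneg s, sq_nonneg q]

end Toolbox4

set_option maxHeartbeats 2000000 in
/-- the spectral norm of the iterates stays controlled. -/
theorem statement12_norm_controlled
    {n₁ n₂ m k r : ℕ}
    (A : Fin m → Matrix (Fin n₁) (Fin n₂) ℝ) (X : Matrix (Fin n₁) (Fin n₂) ℝ)
    (PX : Matrix (Fin n₁) (Fin r) ℝ) (QX : Matrix (Fin n₂) (Fin r) ℝ) (σX : Fin r → ℝ)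
    (hPX : PXᵀ * PX = 1) (hQX : QXᵀ * QX = 1)
    (hσpos : ∀ i, 0 < σX i) (hσanti : Antitone σX)
    (hXsvd : X = PX * Matrix.diagonal σX * QXᵀ)
    (μ : ℝ) (hμ : 0 < μ)
    (V₀ : Matrix (Fin n₁) (Fin k) ℝ) (W₀ : Matrix (Fin n₂) (Fin k) ℝ)
    (Z Z' : ℕ → Matrix (Fin n₁ ⊕ Fin n₂) (Fin k) ℝ)
    (hZ : Z = Zit A X μ V₀ W₀) (hZ' : Z' = Ztil A X μ V₀ W₀)
    (LX : Matrix (Fin n₁ ⊕ Fin n₂) (Fin r) ℝ) (hLX : LX = Zstack PX QX)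
    (κ σm : ℝ) (hκ : κ = condNum X) (hσm : σm = sigmaPos X)
    (Δ : ℕ → Matrix (Fin n₁ ⊕ Fin n₂) (Fin n₁ ⊕ Fin n₂) ℝ) (hΔ : Δ = Δit A X μ V₀ W₀)
    (LXp : Matrix (Fin n₁ ⊕ Fin n₂) (Fin (n₁ + n₂ - r)) ℝ)
    (hLXp1 : LXpᵀ * LXp = 1) (hLXp2 : LXᵀ * LXp = 0)
    (t : ℕ)
    (Qt : Matrix (Fin k) (Fin r) ℝ) (hQt1 : Qtᵀ * Qt = 1)
    (hQt2 : LXᵀ * Z t * Qt * Qtᵀ = LXᵀ * Z t)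
    (Qtp : Matrix (Fin k) (Fin (k - r)) ℝ) (hQtp1 : Qtpᵀ * Qtp = 1) (hQtp2 : Qtᵀ * Qtp = 0)
    (PZ : Matrix (Fin n₁ ⊕ Fin n₂) (Fin r) ℝ) (hPZ : IsOrthCol PZ (Z t * Qt))
    (h1 : specNorm (Z t) ≤ 2 * Real.sqrt (specNorm X))
    (h2 : specNorm (Δ t) ≤ specNorm X / 100)
    (h3 : specNorm (Z t * Qtp) ≤ Real.sqrt (specNorm X) / 100)
    (h4 : specNorm (LXpᵀ * PZ) ≤ 1 / 100)
    (h5 : μ ≤ 1 / (100 * specNorm X)) :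
    specNorm (Z (t + 1)) ≤ 2 * Real.sqrt (specNorm X) := by
  subst hZ hZ' hΔ hLX
  obtain ⟨hPZ1, -, hPZ3⟩ := hPZ
  set σ := specNorm X with hσdef
  set q := Real.sqrt σ with hqdef
  set Zt := Zit A X μ V₀ W₀ t with hZtdef
  set s := specNorm Zt with hsdef
  -- basic positivity facts
  have hσ0 : 0 ≤ σ := specNorm_nonneg X
  have hq0 : 0 ≤ q := Real.sqrt_nonneg σ
  have hq2 : q ^ 2 = σ := Real.sq_sqrt hσ0
  have hσpos : 0 < σ := by
    rcases lt_or_eq_of_le hσ0 with h | h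
    · exact h
    · exfalso
      rw [← h] at h5
      norm_num at h5
      linarith
  have hμσ : μ * σ ≤ 1 / 100 := by
    have h100 : (0:ℝ) < 100 * σ := by linarith
    have := (le_div_iff₀ h100).mp h5
    linarith
  have hs0 : 0 ≤ s := specNorm_nonneg Zt
  have hs2q : s ≤ 2 * q := h1
  have hμq : μ * q ^ 2 ≤ 1 / 100 := by rw [hq2]; exact hμσ
  have hμs2 : μ * s ^ 2 ≤ 1 / 2 := by
    have hsq4 : s ^ 2 ≤ 4 * σ := by nlinarith
    have := mul_le_mul_of_nonneg_left hsq4 hμ.le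
    nlinarith
  -- structure facts about LX
  have hLX1 : (Zstack PX QX)ᵀ * Zstack PX QX = 1 := by
    rw [Zstack_transpose_mul, hPX, hQX, ← two_smul ℝ (1 : Matrix (Fin r) (Fin r) ℝ), smul_smul]
    norm_num
  have hFL : flipSign n₁ n₂ * Zstack PX QX = Zstack PX (-QX) := by
    unfold Zstack flipSign
    rw [Matrix.mul_smul, Matrix.fromBlocks_mul_fromRows]
    ext (i | i) j <;> simp
  have hLFL : (Zstack PX QX)ᵀ * (flipSign n₁ n₂ * Zstack PX QX) = 0 := by
    rw [hFL, Zstack_transpose_mul, hPX, Matrix.mul_neg, hQX]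
    simp
  -- completeness of (Qt, Qtp)
  have hrk : r ≤ k := by
    have e1 : ((1 : Matrix (Fin r) (Fin r) ℝ)).rank = r := by
      rw [Matrix.rank_one, Fintype.card_fin]
    have e2 := Matrix.rank_mul_le_left Qtᵀ Qt
    rw [hQt1, e1] at e2
    have e3 := Matrix.rank_le_card_width Qtᵀ
    rw [Fintype.card_fin] at e3
    exact le_trans e2 e3
  have hQtp2' : Qtpᵀ * Qt = 0 := by
    have := congrArg Matrix.transpose hQtp2
    simpa [Matrix.transpose_mul] using this
  have hQQ : Qt * Qtᵀ + Qtp * Qtpᵀ = 1 := by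
    have hrows : Matrix.fromRows Qtᵀ Qtpᵀ * Matrix.fromCols Qt Qtp = 1 := by
      rw [Matrix.fromRows_mul_fromCols, hQt1, hQtp1, hQtp2, hQtp2', Matrix.fromBlocks_one]
    have e : Fin k ≃ Fin r ⊕ Fin (k - r) :=
      (finCongr (Nat.add_sub_cancel' hrk)).symm.trans finSumFinEquiv.symm
    have := (Matrix.fromCols_mul_fromRows_eq_one_comm e Qt Qtp Qtᵀ Qtpᵀ).mpr hrows
    rwa [Matrix.fromCols_mul_fromRows] at this
  -- completeness of (LX, LXp)
  have hrk2 : r ≤ n₁ + n₂ := by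
    have e1 : ((1 : Matrix (Fin r) (Fin r) ℝ)).rank = r := by
      rw [Matrix.rank_one, Fintype.card_fin]
    have e2 := Matrix.rank_mul_le_left (Zstack PX QX)ᵀ (Zstack PX QX)
    rw [hLX1, e1] at e2
    have e3 := Matrix.rank_le_card_width (Zstack PX QX)ᵀ
    rw [Fintype.card_sum, Fintype.card_fin, Fintype.card_fin] at e3
    exact le_trans e2 e3
  have hLXp2' : LXpᵀ * Zstack PX QX = 0 := by
    have := congrArg Matrix.transpose hLXp2
    simpa [Matrix.transpose_mul] using this
  have hLL : Zstack PX QX * (Zstack PX QX)ᵀ + LXp * LXpᵀ = 1 := by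
    have hrows : Matrix.fromRows (Zstack PX QX)ᵀ LXpᵀ
        * Matrix.fromCols (Zstack PX QX) LXp = 1 := by
      rw [Matrix.fromRows_mul_fromCols, hLX1, hLXp1, hLXp2, hLXp2', Matrix.fromBlocks_one]
    have e : (Fin n₁ ⊕ Fin n₂) ≃ Fin r ⊕ Fin (n₁ + n₂ - r) :=
      finSumFinEquiv.trans ((finCongr (Nat.add_sub_cancel' hrk2)).symm.trans finSumFinEquiv.symm)
    have := (Matrix.fromCols_mul_fromRows_eq_one_comm e (Zstack PX QX) LXp
      (Zstack PX QX)ᵀ LXpᵀ).mpr hrows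
    rwa [Matrix.fromCols_mul_fromRows] at this
  -- the key decomposition bound
  have hkey := ZFZ_bound Zt (Zstack PX QX) LXp Qt Qtp PZ hLX1 hLXp1 hLL hQQ hQt1 hQtp1
    hPZ1 hPZ3 hLFL hq0 hs0 le_rfl h3 h4
  -- the update identity, regrouped
  have hre : Zit A X μ V₀ W₀ (t + 1)
      = (Zt - μ • (Zt * Ztᵀ * Zt))
        + (μ • (symMat X * Zt)
        + (μ • (Ztil A X μ V₀ W₀ t * (Ztil A X μ V₀ W₀ t)ᵀ * Zt)
        + μ • (Δit A X μ V₀ W₀ t * Zt))) := by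
    rw [update_eq A X μ V₀ W₀ t, ← hZtdef]
    simp only [Matrix.sub_mul, Matrix.add_mul, smul_sub, smul_add]
    abel
  -- norm bounds for the four pieces
  have n1 : specNorm (Zt - μ • (Zt * Ztᵀ * Zt)) ≤ Real.sqrt (s ^ 2 - μ * s ^ 4) :=
    contraction_bound Zt hμ.le hs0 le_rfl hμs2
  have n2 : specNorm (symMat X * Zt) ≤ σ * s :=
    specNorm_mul_le2 _ _ (specNorm_symMat_le X) le_rfl hσ0
  have n3 : specNorm (Ztil A X μ V₀ W₀ t * (Ztil A X μ V₀ W₀ t)ᵀ * Zt)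
      ≤ s * ((201/10000) * s ^ 2 + (2/100) * (s * q) + (1/10000) * q ^ 2) := by
    have hform : Ztil A X μ V₀ W₀ t * (Ztil A X μ V₀ W₀ t)ᵀ * Zt
        = flipSign n₁ n₂ * (Zt * (Ztᵀ * (flipSign n₁ n₂ * Zt))) := by
      rw [Ztil_eq_flip A X μ V₀ W₀ t, ← hZtdef, Matrix.transpose_mul, flipSign_transpose]
      simp only [Matrix.mul_assoc]
    rw [hform, specNorm_flip_mul]
    exact specNorm_mul_le2 _ _ le_rfl hkey hs0
  have n4 : specNorm (Δit A X μ V₀ W₀ t * Zt) ≤ (σ / 100) * s := by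
    refine specNorm_mul_le2 _ _ ?_ le_rfl (by positivity)
    exact h2
  -- put everything together with the triangle inequality
  set b := Real.sqrt (s ^ 2 - μ * s ^ 4) with hbdef
  have hb0 : 0 ≤ b := Real.sqrt_nonneg _
  have hkeynn : 0 ≤ s ^ 2 - μ * s ^ 4 := by nlinarith
  have hb2 : b ^ 2 = s ^ 2 - μ * s ^ 4 := Real.sq_sqrt hkeynn
  have total : specNorm (Zit A X μ V₀ W₀ (t + 1))
      ≤ b + (μ * (σ * s)
        + (μ * (s * ((201/10000) * s ^ 2 + (2/100) * (s * q) + (1/10000) * q ^ 2))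
        + μ * ((σ / 100) * s))) := by
    rw [hre]
    have t1 := specNorm_add_le (Zt - μ • (Zt * Ztᵀ * Zt))
      (μ • (symMat X * Zt)
        + (μ • (Ztil A X μ V₀ W₀ t * (Ztil A X μ V₀ W₀ t)ᵀ * Zt)
        + μ • (Δit A X μ V₀ W₀ t * Zt)))
    have t2 := specNorm_add_le (μ • (symMat X * Zt))
      (μ • (Ztil A X μ V₀ W₀ t * (Ztil A X μ V₀ W₀ t)ᵀ * Zt)
        + μ • (Δit A X μ V₀ W₀ t * Zt))
    have t3 := specNorm_add_le (μ • (Ztil A X μ V₀ W₀ t * (Ztil A X μ V₀ W₀ t)ᵀ * Zt))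
      (μ • (Δit A X μ V₀ W₀ t * Zt))
    have m1 := specNorm_smul μ (symMat X * Zt)
    have m2 := specNorm_smul μ (Ztil A X μ V₀ W₀ t * (Ztil A X μ V₀ W₀ t)ᵀ * Zt)
    have m3 := specNorm_smul μ (Δit A X μ V₀ W₀ t * Zt)
    rw [abs_of_pos hμ] at m1 m2 m3
    have c1 : μ * specNorm (symMat X * Zt) ≤ μ * (σ * s) :=
      mul_le_mul_of_nonneg_left n2 hμ.le
    have c2 : μ * specNorm (Ztil A X μ V₀ W₀ t * (Ztil A X μ V₀ W₀ t)ᵀ * Zt)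
        ≤ μ * (s * ((201/10000) * s ^ 2 + (2/100) * (s * q) + (1/10000) * q ^ 2)) :=
      mul_le_mul_of_nonneg_left n3 hμ.le
    have c3 : μ * specNorm (Δit A X μ V₀ W₀ t * Zt) ≤ μ * ((σ / 100) * s) :=
      mul_le_mul_of_nonneg_left n4 hμ.le
    linarith
  clear_value b s q σ Zt
  rw [← hq2] at total
  exact le_trans total (final_numeric hμ hq0 hs0 hs2q hμq hμs2 hb0 hb2)


end AsymMatrixSensing
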